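/- Let G be a torsion-free abelian group and let H be a strongly invariant subgroup of G. Then the purification H_* = {x ∈ G : nx ∈ H for some positive integer n} is also a strongly invariant subgroup of G. -/

import Mathlib

/-- A subgroup `S` of an abelian group `G` is *strongly invariant* if every additive
homomorphism `ψ : S →+ G` maps `S` into itself. -/
def IsStronglyInvariant {G : Type*} [AddCommGroup G] (S : AddSubgroup G) : Prop :=
  ∀ (ψ : S →+ G) (s : S), (ψ s : G) ∈ S

/-- A subgroup `F` of `G` is *fully invariant* if every endomorphism of `G` maps `F` into
itself. -/
def IsFullyInvariant {G : Type*} [AddCommGroup G] (F : AddSubgroup G) : Prop :=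
  ∀ (φ : G →+ G), ∀ x ∈ F, φ x ∈ F

/-- A group is *si-simple* if its only strongly invariant subgroups are `⊥` and `⊤`. -/
def SiSimple (G : Type*) [AddCommGroup G] : Prop :=
  ∀ S : AddSubgroup G, IsStronglyInvariant S → S = ⊥ ∨ S = ⊤

/-- A non-zero group `G` is an *ISI-group* if all of its strongly invariant subgroups
different from `⊥` and `⊤` (if any) are isomorphic to one another. -/
def IsISI (G : Type*) [AddCommGroup G] : Prop :=
  Nontrivial G ∧ ∀ H F : AddSubgroup G, IsStronglyInvariant H → IsStronglyInvariant F →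
    H ≠ ⊥ → H ≠ ⊤ → F ≠ ⊥ → F ≠ ⊤ → Nonempty (H ≃+ F)

/-- A non-zero group `G` is a *strongly ISI-group* if all of its non-zero strongly invariant
subgroups are isomorphic to one another. -/
def IsStronglyISI (G : Type*) [AddCommGroup G] : Prop :=
  Nontrivial G ∧ ∀ H F : AddSubgroup G, IsStronglyInvariant H → IsStronglyInvariant F →
    H ≠ ⊥ → F ≠ ⊥ → Nonempty (H ≃+ F)

/-- A non-zero group `G` is an *IFI-group* if all of its fully invariant subgroups
different from `⊥` and `⊤` (if any) are isomorphic to one another. -/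
def IsIFI (G : Type*) [AddCommGroup G] : Prop :=
  Nontrivial G ∧ ∀ H F : AddSubgroup G, IsFullyInvariant H → IsFullyInvariant F →
    H ≠ ⊥ → H ≠ ⊤ → F ≠ ⊥ → F ≠ ⊤ → Nonempty (H ≃+ F)

/-- Multiplication by a natural number `n`, as an endomorphism of `G`. -/
def nsmulHom {G : Type*} [AddCommGroup G] (n : ℕ) : G →+ G where
  toFun x := n • x
  map_zero' := smul_zero n
  map_add' a b := smul_add n a b

/-- `H` is `n`-pure in `G` if `H ∩ nG = nH`. -/
def IsNPure {G : Type*} [AddCommGroup G] (n : ℕ) (H : AddSubgroup G) : Prop :=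
  H ⊓ (nsmulHom (G := G) n).range = H.map (nsmulHom n)

/-- `H` is a pure subgroup of `G` if `H ∩ nG = nH` for every positive natural number `n`. -/
def IsPureSubgroup {G : Type*} [AddCommGroup G] (H : AddSubgroup G) : Prop :=
  ∀ n : ℕ, 0 < n → IsNPure n H

/-- A torsion-free group is *s-irreducible* if it has no pure strongly invariant subgroups
other than `⊥` and `⊤`. -/
def SIrreducible (G : Type*) [AddCommGroup G] : Prop :=
  ∀ H : AddSubgroup G, IsPureSubgroup H → IsStronglyInvariant H → H = ⊥ ∨ H = ⊤

/-- `Hom(F,G)F = ∑_{φ ∈ Hom(F,G)} φ(F)`, the subgroup generated by all images of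
homomorphisms from `F` to `G`. -/
def homGenSub {G : Type*} [AddCommGroup G] (F : AddSubgroup G) : AddSubgroup G :=
  ⨆ φ : F →+ G, φ.range

/-- A group is divisible if `nD = D` for every positive natural number `n`. -/
def IsDivisibleGroup (G : Type*) [AddCommGroup G] : Prop :=
  ∀ n : ℕ, 0 < n → ∀ x : G, ∃ y : G, n • y = x

/-- The purification `H_* = {x ∈ G : nx ∈ H for some positive integer n}` of a subgroup. -/
def purification {G : Type*} [AddCommGroup G] (H : AddSubgroup G) : AddSubgroup G where
  carrier := {x : G | ∃ n : ℕ, 0 < n ∧ n • x ∈ H}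
  zero_mem' := ⟨1, Nat.one_pos, by simpa using H.zero_mem⟩
  add_mem' := by
    rintro a b ⟨n, hn, ha⟩ ⟨m, hm, hb⟩
    refine ⟨n * m, Nat.mul_pos hn hm, ?_⟩
    rw [smul_add]
    refine add_mem ?_ ?_
    · rw [mul_comm, mul_smul]; exact AddSubgroup.nsmul_mem H ha m
    · rw [mul_smul]; exact AddSubgroup.nsmul_mem H hb n
  neg_mem' := by
    rintro a ⟨n, hn, ha⟩
    exact ⟨n, hn, by simpa [smul_neg] using H.neg_mem ha⟩

/-- `AddMonoid.IsTorsionFree` as in the older Mathlib: no non-zero element has finite order. -/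
def AddMonoid.IsTorsionFree (G : Type*) [AddMonoid G] : Prop :=
  ∀ g : G, g ≠ 0 → ¬IsOfFinAddOrder g

/-- In a torsion-free abelian group, the purification of a strongly invariant subgroup is
strongly invariant. -/
theorem statement10 {G : Type*} [AddCommGroup G] (htf : AddMonoid.IsTorsionFree G)
    (H : AddSubgroup G) (hsi : IsStronglyInvariant H) :
    IsStronglyInvariant (purification H) := by
  intro ψ s
  obtain ⟨n, hn, hns⟩ := s.2
  have hle : H ≤ purification H := fun h hh => ⟨1, Nat.one_pos, by simpa using hh⟩
  have key := hsi (ψ.comp (AddSubgroup.inclusion hle)) ⟨n • (s : G), hns⟩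
  refine ⟨n, hn, ?_⟩
  have hEq : (⟨n • (s : G), hle hns⟩ : purification H) = n • s := by
    ext; simp
  simpa [AddSubgroup.inclusion, hEq, map_nsmul] using key
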